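/- Let G be a finite graph on n ≥ 4 vertices with labels assigned by a uniform random permutation, and let R₁(t) count edges with both endpoint labels ≤ t. Then Var(R₁(t)) = E[R₁(t)](1 − E[R₁(t)]) + [t(t−1)(t−2)/(n(n−1)(n−2))]·(Σᵢ|Gᵢ|² − 2|G|) + [t(t−1)(t−2)(t−3)/(n(n−1)(n−2)(n−3))]·(|G|² − Σᵢ|Gᵢ|² + |G|), where |Gᵢ| is the degree of vertex i and |G| is the number of edges. -/

import Mathlib

open Finset
open scoped Classical

noncomputable section

/-- Label of vertex `v` under permutation `π`: a value in `{1,...,n}`. -/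
def lab {n : ℕ} (π : Equiv.Perm (Fin n)) (v : Fin n) : ℕ := (π v).val + 1

/-- Number of edges of `G` with both endpoint labels `≤ t`. -/
def R1 {n : ℕ} (G : SimpleGraph (Fin n)) (t : ℕ) (π : Equiv.Perm (Fin n)) : ℕ :=
  (G.edgeFinset.filter (fun e => ∀ v ∈ e, lab π v ≤ t)).card

/-- Number of edges of `G` with both endpoint labels `> t`. -/
def R2 {n : ℕ} (G : SimpleGraph (Fin n)) (t : ℕ) (π : Equiv.Perm (Fin n)) : ℕ :=
  (G.edgeFinset.filter (fun e => ∀ v ∈ e, t < lab π v)).card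

/-- Number of edges of `G` with one endpoint label `≤ t` and the other `> t`. -/
def R0 {n : ℕ} (G : SimpleGraph (Fin n)) (t : ℕ) (π : Equiv.Perm (Fin n)) : ℕ :=
  (G.edgeFinset.filter (fun e => (∃ v ∈ e, lab π v ≤ t) ∧ (∃ v ∈ e, t < lab π v))).card

/-- Expectation under the permutation null distribution (uniform over all `n!` permutations). -/
def Ex {n : ℕ} (f : Equiv.Perm (Fin n) → ℝ) : ℝ :=
  (∑ π : Equiv.Perm (Fin n), f π) / (Nat.factorial n)

/-- Variance under the permutation null distribution. -/
def Var {n : ℕ} (f : Equiv.Perm (Fin n) → ℝ) : ℝ := Ex (fun π => (f π - Ex f) ^ 2)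

/-- Covariance under the permutation null distribution. -/
def Cov {n : ℕ} (f g : Equiv.Perm (Fin n) → ℝ) : ℝ :=
  Ex (fun π => (f π - Ex f) * (g π - Ex g))

namespace VarAux

variable {n : ℕ}

lemma card_perm_fixing (A : Finset (Fin n)) :
    (univ.filter fun π : Equiv.Perm (Fin n) => ∀ a ∈ A, π a = a).card
      = (n - A.card).factorial := by
  rw [← Fintype.card_subtype]
  have e : {π : Equiv.Perm (Fin n) // ∀ a ∈ A, π a = a}
      ≃ Equiv.Perm {x : Fin n // x ∉ A} := by
    refine Equiv.trans ?_ (Equiv.Perm.subtypeEquivSubtypePerm (fun x => x ∉ A)).symm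
    exact Equiv.subtypeEquivRight (fun π =>
      ⟨fun h a ha => h a (not_not.mp ha), fun h a ha => h a (fun h2 => h2 ha)⟩)
  rw [Fintype.card_congr e, Fintype.card_perm]
  congr 1
  rw [Fintype.card_subtype_compl, Fintype.card_fin, Fintype.card_coe]

lemma exists_perm_extend (A : Finset (Fin n)) (f : Fin n → Fin n)
    (hf : Set.InjOn f A) : ∃ σ : Equiv.Perm (Fin n), ∀ a ∈ A, σ a = f a := by
  set g : {x : Fin n // x ∈ A} → Fin n := fun a => f a with hg
  have hginj : Function.Injective g := by
    intro a b hab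
    exact Subtype.ext (hf a.2 b.2 hab)
  have hcard : Fintype.card {x : Fin n // ¬ x ∈ A}
      = Fintype.card {x : Fin n // ¬ x ∈ Set.range g} := by
    rw [Fintype.card_subtype_compl, Fintype.card_subtype_compl]
    congr 1
    rw [Fintype.card_coe]
    have := Set.card_range_of_injective hginj
    rw [this, Fintype.card_coe]
  have e2 : {x : Fin n // ¬ x ∈ A} ≃ {x : Fin n // ¬ x ∈ Set.range g} :=
    Fintype.equivOfCardEq hcard
  refine ⟨(Equiv.sumCompl (· ∈ A)).symm.trans
    (((Equiv.ofInjective g hginj).sumCongr e2).trans (Equiv.sumCompl (· ∈ Set.range g))), ?_⟩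
  intro a ha
  simp only [Equiv.trans_apply]
  rw [Equiv.sumCompl_symm_apply_of_pos (p := (· ∈ A)) (a := a) ha]
  simp only [Equiv.sumCongr_apply, Sum.map_inl, Equiv.sumCompl_apply_inl]
  rfl

lemma card_perm_eq (A : Finset (Fin n)) (f : Fin n → Fin n) (hf : Set.InjOn f A) :
    (univ.filter fun π : Equiv.Perm (Fin n) => ∀ a ∈ A, π a = f a).card
      = (n - A.card).factorial := by
  obtain ⟨σ, hσ⟩ := exists_perm_extend A f hf
  rw [← card_perm_fixing A]
  apply Finset.card_bij' (fun π _ => σ⁻¹ * π) (fun π _ => σ * π)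
  · intro π hπ
    simp only [mem_filter, mem_univ, true_and] at hπ ⊢
    intro a ha
    rw [Equiv.Perm.mul_apply, hπ a ha, ← hσ a ha]
    simp
  · intro π hπ
    simp only [mem_filter, mem_univ, true_and] at hπ ⊢
    intro a ha
    rw [Equiv.Perm.mul_apply, hπ a ha, hσ a ha]
  · intro π _; simp [mul_assoc, ← Equiv.Perm.mul_apply]
  · intro π _; simp [mul_assoc, ← Equiv.Perm.mul_apply]

lemma card_inj_funs (A T : Finset (Fin n)) :
    ((univ : Finset ({x : Fin n // x ∈ A} → Fin n)).filter
      fun g => Function.Injective g ∧ ∀ a, g a ∈ T).card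
      = T.card.descFactorial A.card := by
  rw [← Fintype.card_subtype]
  have e : {g : {x : Fin n // x ∈ A} → Fin n // Function.Injective g ∧ ∀ a, g a ∈ T}
      ≃ ({x : Fin n // x ∈ A} ↪ {x : Fin n // x ∈ T}) :=
    { toFun := fun g => ⟨fun a => ⟨g.1 a, g.2.2 a⟩,
        fun a b hab => g.2.1 (congrArg Subtype.val hab)⟩
      invFun := fun e => ⟨fun a => (e a).1,
        ⟨fun a b hab => e.injective (Subtype.ext hab), fun a => (e a).2⟩⟩
      left_inv := fun g => rfl
      right_inv := fun e => rfl }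
  rw [Fintype.card_congr e, Fintype.card_embedding_eq, Fintype.card_coe, Fintype.card_coe]

lemma card_perm_mem (A T : Finset (Fin n)) :
    (univ.filter fun π : Equiv.Perm (Fin n) => ∀ a ∈ A, π a ∈ T).card
      = T.card.descFactorial A.card * (n - A.card).factorial := by
  set F : Equiv.Perm (Fin n) → ({x : Fin n // x ∈ A} → Fin n) :=
    fun π a => π a with hF
  set tt : Finset ({x : Fin n // x ∈ A} → Fin n) :=
    (univ.filter fun g => Function.Injective g ∧ ∀ a, g a ∈ T) with htt
  have H : ∀ π ∈ (univ.filter fun π : Equiv.Perm (Fin n) => ∀ a ∈ A, π a ∈ T),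
      F π ∈ tt := by
    intro π hπ
    simp only [htt, mem_filter, mem_univ, true_and] at hπ ⊢
    exact ⟨fun a b hab => Subtype.ext (π.injective hab), fun a => hπ a.1 a.2⟩
  rw [Finset.card_eq_sum_card_fiberwise H]
  have hfib : ∀ g ∈ tt,
      ((univ.filter fun π : Equiv.Perm (Fin n) => ∀ a ∈ A, π a ∈ T).filter
        fun π => F π = g).card = (n - A.card).factorial := by
    intro g hg
    simp only [htt, mem_filter, mem_univ, true_and] at hg
    have hset : ((univ.filter fun π : Equiv.Perm (Fin n) => ∀ a ∈ A, π a ∈ T).filter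
        fun π => F π = g)
        = univ.filter fun π : Equiv.Perm (Fin n) =>
            ∀ a ∈ A, π a = (fun x => if h : x ∈ A then g ⟨x, h⟩ else x) a := by
      ext π
      simp only [mem_filter, mem_univ, true_and]
      constructor
      · rintro ⟨-, h2⟩ a ha
        simp only [dif_pos ha, ← h2]
        rfl
      · intro h
        constructor
        · intro a ha
          rw [h a ha]; simp only [dif_pos ha]; exact hg.2 ⟨a, ha⟩
        · funext a
          rw [hF]
          simp only [h a.1 a.2, dif_pos a.2]
    rw [hset]
    apply card_perm_eq
    intro a ha b hb hab
    have ha' : a ∈ A := Finset.mem_coe.mp ha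
    have hb' : b ∈ A := Finset.mem_coe.mp hb
    have hab' : g ⟨a, ha'⟩ = g ⟨b, hb'⟩ := by
      simpa only [dif_pos ha', dif_pos hb'] using hab
    exact congrArg Subtype.val (hg.1 hab')
  rw [Finset.sum_congr rfl hfib, Finset.sum_const, smul_eq_mul, card_inj_funs]

lemma var_eq {n : ℕ} (f : Equiv.Perm (Fin n) → ℝ) :
    Var f = Ex (fun π => f π ^ 2) - (Ex f) ^ 2 := by
  have hcard : (Finset.univ : Finset (Equiv.Perm (Fin n))).card = n.factorial := by
    rw [Finset.card_univ, Fintype.card_perm, Fintype.card_fin]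
  have hfact : ((n.factorial : ℝ)) ≠ 0 := Nat.cast_ne_zero.mpr (Nat.factorial_ne_zero n)
  simp only [Var, Ex]
  have hexp : ∀ c : ℝ, ∑ π : Equiv.Perm (Fin n), (f π - c) ^ 2
      = (∑ π : Equiv.Perm (Fin n), f π ^ 2) - 2 * c * (∑ π : Equiv.Perm (Fin n), f π)
        + (n.factorial : ℝ) * c ^ 2 := by
    intro c
    have : ∀ π : Equiv.Perm (Fin n), (f π - c) ^ 2 = f π ^ 2 - 2 * c * f π + c ^ 2 := by
      intro π; ring
    rw [Finset.sum_congr rfl (fun π _ => this π)]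
    rw [Finset.sum_add_distrib, Finset.sum_sub_distrib, ← Finset.mul_sum,
      Finset.sum_const, hcard, nsmul_eq_mul]
  rw [hexp]
  field_simp
  ring

lemma desc2 (t : ℕ) : ((t.descFactorial 2 : ℕ) : ℝ) = (t : ℝ) * ((t : ℝ) - 1) := by
  rcases Nat.lt_or_ge t 2 with h | h
  · interval_cases t <;> norm_num [Nat.descFactorial]
  · rw [Nat.descFactorial_eq_prod_range]
    rw [Finset.prod_range_succ, Finset.prod_range_succ, Finset.prod_range_zero]
    simp only [Nat.sub_zero]
    push_cast [Nat.cast_sub (by omega : 1 ≤ t)]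
    ring

lemma desc3 (t : ℕ) :
    ((t.descFactorial 3 : ℕ) : ℝ) = (t : ℝ) * ((t : ℝ) - 1) * ((t : ℝ) - 2) := by
  rcases Nat.lt_or_ge t 3 with h | h
  · interval_cases t <;> norm_num [Nat.descFactorial]
  · rw [Nat.descFactorial_eq_prod_range]
    rw [Finset.prod_range_succ, Finset.prod_range_succ, Finset.prod_range_succ,
      Finset.prod_range_zero]
    simp only [Nat.sub_zero]
    push_cast [Nat.cast_sub (by omega : 1 ≤ t), Nat.cast_sub (by omega : 2 ≤ t)]
    ring

lemma desc4 (t : ℕ) :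
    ((t.descFactorial 4 : ℕ) : ℝ)
      = (t : ℝ) * ((t : ℝ) - 1) * ((t : ℝ) - 2) * ((t : ℝ) - 3) := by
  rcases Nat.lt_or_ge t 4 with h | h
  · interval_cases t <;> norm_num [Nat.descFactorial]
  · rw [Nat.descFactorial_eq_prod_range]
    rw [Finset.prod_range_succ, Finset.prod_range_succ, Finset.prod_range_succ,
      Finset.prod_range_succ, Finset.prod_range_zero]
    simp only [Nat.sub_zero]
    push_cast [Nat.cast_sub (by omega : 1 ≤ t), Nat.cast_sub (by omega : 2 ≤ t),
      Nat.cast_sub (by omega : 3 ≤ t)]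
    ring
end VarAux

open VarAux

theorem variance_R1 (n t : ℕ) (hn : 4 ≤ n) (ht1 : 1 ≤ t) (ht2 : t < n)
    (G : SimpleGraph (Fin n)) :
    Var (fun π => (R1 G t π : ℝ)) =
      Ex (fun π => (R1 G t π : ℝ)) * (1 - Ex (fun π => (R1 G t π : ℝ)))
      + (t : ℝ) * ((t : ℝ) - 1) * ((t : ℝ) - 2) / ((n : ℝ) * ((n : ℝ) - 1) * ((n : ℝ) - 2))
          * ((∑ i : Fin n, (G.degree i : ℝ) ^ 2) - 2 * (G.edgeFinset.card : ℝ))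
      + (t : ℝ) * ((t : ℝ) - 1) * ((t : ℝ) - 2) * ((t : ℝ) - 3) /
          ((n : ℝ) * ((n : ℝ) - 1) * ((n : ℝ) - 2) * ((n : ℝ) - 3))
          * ((G.edgeFinset.card : ℝ) ^ 2 - (∑ i : Fin n, (G.degree i : ℝ) ^ 2)
              + (G.edgeFinset.card : ℝ)) := by
  classical
  set E := G.edgeFinset with hE
  set m := E.card with hm
  set T : Finset (Fin n) := univ.filter (fun x : Fin n => (x : ℕ) < t) with hTdef
  have hTcard : T.card = t := by
    have h : T = (univ : Finset (Fin t)).map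
        ⟨Fin.castLE (le_of_lt ht2), Fin.castLE_injective _⟩ := by
      ext x
      simp only [hTdef, mem_filter, mem_univ, true_and, mem_map,
        Function.Embedding.coeFn_mk]
      constructor
      · intro hx
        exact ⟨⟨(x : ℕ), hx⟩, by ext; simp⟩
      · rintro ⟨a, rfl⟩
        simpa using a.isLt
    rw [h, card_map, card_univ, Fintype.card_fin]
  set V : Sym2 (Fin n) → Finset (Fin n) := fun e => univ.filter (· ∈ e) with hV
  have hVmem : ∀ (e : Sym2 (Fin n)) (v : Fin n), v ∈ V e ↔ v ∈ e := by
    intro e v; simp [hV]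
  have hrep : ∀ e ∈ E, ∃ a b : Fin n, a ≠ b ∧ e = s(a, b) := by
    intro e
    induction e with
    | _ a b =>
      intro he
      have hadj : G.Adj a b := by
        rw [hE, SimpleGraph.mem_edgeFinset, SimpleGraph.mem_edgeSet] at he
        exact he
      exact ⟨a, b, hadj.ne, rfl⟩
  have hVpair : ∀ a b : Fin n, a ≠ b → V s(a, b) = {a, b} := by
    intro a b hab
    ext x
    simp [hV, Sym2.mem_iff]
  have hVcard : ∀ e ∈ E, (V e).card = 2 := by
    intro e he
    obtain ⟨a, b, hab, rfl⟩ := hrep e he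
    rw [hVpair a b hab, card_insert_of_notMem (by simp [hab]), card_singleton]
  have hVeq : ∀ e ∈ E, ∀ f ∈ E, V e = V f → e = f := by
    intro e he f hf h
    obtain ⟨a, b, hab, rfl⟩ := hrep e he
    have ha : a ∈ f := (hVmem f a).mp (h ▸ ((hVmem _ a).mpr (by simp)))
    have hb : b ∈ f := (hVmem f b).mp (h ▸ ((hVmem _ b).mpr (by simp)))
    exact ((Sym2.mem_and_mem_iff hab).mp ⟨ha, hb⟩).symm
  set ind : Sym2 (Fin n) → Equiv.Perm (Fin n) → ℝ :=
    fun e π => if ∀ v ∈ V e, π v ∈ T then 1 else 0 with hind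
  have hcond : ∀ (π : Equiv.Perm (Fin n)) (e : Sym2 (Fin n)),
      (∀ v ∈ e, lab π v ≤ t) ↔ (∀ v ∈ V e, π v ∈ T) := by
    intro π e
    constructor
    · intro h v hv
      have h2 := h v ((hVmem e v).mp hv)
      simp only [hTdef, mem_filter, mem_univ, true_and]
      exact h2
    · intro h v hv
      have h2 := h v ((hVmem e v).mpr hv)
      simp only [hTdef, mem_filter, mem_univ, true_and] at h2
      exact h2
  have hR1 : ∀ π : Equiv.Perm (Fin n), ((R1 G t π : ℝ)) = ∑ e ∈ E, ind e π := by
    intro π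
    have h1 : (E.filter fun e => ∀ v ∈ e, lab π v ≤ t)
        = E.filter fun e => ∀ v ∈ V e, π v ∈ T :=
      filter_congr (fun e _ => hcond π e)
    simp only [R1]
    rw [h1]
    simp only [hind]
    rw [Finset.sum_boole]
  set q : ℕ → ℝ := fun k => ((t.descFactorial k * (n - k).factorial : ℕ) : ℝ) with hq
  have hcount : ∀ A : Finset (Fin n),
      (∑ π : Equiv.Perm (Fin n), if ∀ v ∈ A, π v ∈ T then (1 : ℝ) else 0)
        = q A.card := by
    intro A
    rw [Finset.sum_boole, hq]
    norm_cast
    rw [card_perm_mem A T, hTcard]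
  have hsum1 : ∀ e ∈ E, (∑ π : Equiv.Perm (Fin n), ind e π) = q 2 := by
    intro e he
    simp only [hind]
    rw [hcount (V e), hVcard e he]
  have hprod : ∀ (e f : Sym2 (Fin n)) (π : Equiv.Perm (Fin n)), ind e π * ind f π
      = if ∀ v ∈ V e ∪ V f, π v ∈ T then (1 : ℝ) else 0 := by
    intro e f π
    simp only [hind]
    by_cases h1 : ∀ v ∈ V e, π v ∈ T <;> by_cases h2 : ∀ v ∈ V f, π v ∈ T
    · rw [if_pos h1, if_pos h2, if_pos (fun v hv => by
        rcases Finset.mem_union.mp hv with h | h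
        exacts [h1 v h, h2 v h])]
      norm_num
    · rw [if_pos h1, if_neg h2, if_neg
        (fun h => h2 (fun v hv => h v (Finset.mem_union_right _ hv)))]
      norm_num
    · rw [if_neg h1, if_pos h2, if_neg
        (fun h => h1 (fun v hv => h v (Finset.mem_union_left _ hv)))]
      norm_num
    · rw [if_neg h1, if_neg h2, if_neg
        (fun h => h1 (fun v hv => h v (Finset.mem_union_left _ hv)))]
      norm_num
  have hsum2 : ∀ e ∈ E, ∀ f ∈ E, (∑ π : Equiv.Perm (Fin n), ind e π * ind f π)
      = q ((V e ∪ V f).card) := by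
    intro e he f hf
    rw [Finset.sum_congr rfl (fun π _ => hprod e f π), hcount]
  have hinter : ∀ e ∈ E, ∀ f ∈ E, (V e ∪ V f).card = 4 - (V e ∩ V f).card := by
    intro e he f hf
    have h := Finset.card_union_add_card_inter (V e) (V f)
    rw [hVcard e he, hVcard f hf] at h
    omega
  have hle2 : ∀ e ∈ E, ∀ f ∈ E, (V e ∩ V f).card ≤ 2 := by
    intro e he f hf
    exact le_trans (card_le_card inter_subset_left) (le_of_eq (hVcard e he))
  have hc2 : ∀ e ∈ E, ∀ f ∈ E, ((V e ∩ V f).card = 2 ↔ e = f) := by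
    intro e he f hf
    constructor
    · intro h
      have h1 : V e ∩ V f = V e :=
        Finset.eq_of_subset_of_card_le inter_subset_left
          (by rw [hVcard e he, h])
      have h2 : V e ⊆ V f := by rw [← h1]; exact inter_subset_right
      have h3 : V e = V f :=
        Finset.eq_of_subset_of_card_le h2 (by rw [hVcard e he, hVcard f hf])
      exact hVeq e he f hf h3
    · rintro rfl
      rw [inter_self, hVcard e he]
  have hpoint : ∀ e ∈ E, ∀ f ∈ E,
      q ((V e ∪ V f).card)
        = q 4 + ((V e ∩ V f).card : ℝ) * (q 3 - q 4)
          + (if e = f then (1 : ℝ) else 0) * (q 2 - 2 * q 3 + q 4) := by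
    intro e he f hf
    rw [hinter e he f hf]
    by_cases hef : e = f
    · have h2 : (V e ∩ V f).card = 2 := (hc2 e he f hf).mpr hef
      rw [h2, if_pos hef]
      norm_num
      ring
    · have h2 : (V e ∩ V f).card ≠ 2 := fun h => hef ((hc2 e he f hf).mp h)
      have h3 : (V e ∩ V f).card = 0 ∨ (V e ∩ V f).card = 1 := by
        have := hle2 e he f hf; omega
      rw [if_neg hef]
      rcases h3 with h | h <;> rw [h] <;> norm_num
  have hdeg : ∀ i : Fin n, (E.filter fun e => i ∈ e).card = G.degree i := by
    intro i
    rw [← SimpleGraph.card_incidenceFinset_eq_degree]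
    congr 1
    rw [SimpleGraph.incidenceFinset_eq_filter]
  have hcsum : (∑ e ∈ E, ∑ f ∈ E, ((V e ∩ V f).card : ℝ))
      = ∑ i : Fin n, (G.degree i : ℝ) ^ 2 := by
    have h1 : ∀ e f : Sym2 (Fin n), ((V e ∩ V f).card : ℝ)
        = ∑ i : Fin n, (if i ∈ e then (1 : ℝ) else 0) * (if i ∈ f then (1 : ℝ) else 0) := by
      intro e f
      have h2 : ∀ i : Fin n, (if i ∈ e then (1 : ℝ) else 0) * (if i ∈ f then (1 : ℝ) else 0)
          = if i ∈ V e ∩ V f then (1 : ℝ) else 0 := by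
        intro i
        by_cases h3 : i ∈ e <;> by_cases h4 : i ∈ f <;>
          simp [h3, h4, mem_inter, hVmem]
      rw [Finset.sum_congr rfl (fun i _ => h2 i), Finset.sum_boole]
      congr 1
      rw [Finset.filter_mem_eq_inter, Finset.univ_inter]
    rw [Finset.sum_congr rfl (fun e _ => Finset.sum_congr rfl (fun f _ => h1 e f))]
    rw [Finset.sum_congr rfl (fun e _ => Finset.sum_comm), Finset.sum_comm]
    refine Finset.sum_congr rfl (fun i _ => ?_)
    have ha : (∑ e ∈ E, (if i ∈ e then (1 : ℝ) else 0))
        = ((E.filter fun e => i ∈ e).card : ℝ) := Finset.sum_boole _ _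
    calc (∑ e ∈ E, ∑ f ∈ E, (if i ∈ e then (1 : ℝ) else 0) * (if i ∈ f then (1 : ℝ) else 0))
        = (∑ e ∈ E, (if i ∈ e then (1 : ℝ) else 0))
          * (∑ f ∈ E, (if i ∈ f then (1 : ℝ) else 0)) := (Finset.sum_mul_sum _ _ _ _).symm
      _ = (G.degree i : ℝ) ^ 2 := by rw [ha, hdeg i, pow_two]
  have hdiag : (∑ e ∈ E, ∑ f ∈ E, (if e = f then (1 : ℝ) else 0)) = m := by
    rw [Finset.sum_congr rfl (fun e he => ?_), Finset.sum_const, nsmul_eq_mul, mul_one]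
    rw [Finset.sum_ite_eq E e (fun _ => (1 : ℝ)), if_pos he]
  have hS1 : (∑ π : Equiv.Perm (Fin n), (R1 G t π : ℝ)) = m * q 2 := by
    rw [Finset.sum_congr rfl (fun π _ => hR1 π), Finset.sum_comm]
    rw [Finset.sum_congr rfl (fun e he => hsum1 e he), Finset.sum_const, nsmul_eq_mul]
  have hS2 : (∑ π : Equiv.Perm (Fin n), (R1 G t π : ℝ) ^ 2)
      = (m : ℝ) ^ 2 * q 4 + (∑ i : Fin n, (G.degree i : ℝ) ^ 2) * (q 3 - q 4)
        + m * (q 2 - 2 * q 3 + q 4) := by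
    have h1 : ∀ π : Equiv.Perm (Fin n),
        (R1 G t π : ℝ) ^ 2 = ∑ e ∈ E, ∑ f ∈ E, ind e π * ind f π := by
      intro π
      rw [hR1 π, sq, Finset.sum_mul_sum]
    rw [Finset.sum_congr rfl (fun π _ => h1 π), Finset.sum_comm]
    rw [Finset.sum_congr rfl (fun e _ => Finset.sum_comm)]
    rw [Finset.sum_congr rfl (fun e he => Finset.sum_congr rfl (fun f hf => hsum2 e he f hf))]
    rw [Finset.sum_congr rfl (fun e he => Finset.sum_congr rfl (fun f hf => hpoint e he f hf))]
    simp only [Finset.sum_add_distrib]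
    have e1 : (∑ _e ∈ E, ∑ _f ∈ E, q 4) = (m : ℝ) ^ 2 * q 4 := by
      simp only [Finset.sum_const, nsmul_eq_mul, ← hm]
      ring
    have e2 : (∑ e ∈ E, ∑ f ∈ E, ((V e ∩ V f).card : ℝ) * (q 3 - q 4))
        = (∑ i : Fin n, (G.degree i : ℝ) ^ 2) * (q 3 - q 4) := by
      rw [← hcsum, Finset.sum_mul]
      exact Finset.sum_congr rfl (fun e _ => by rw [Finset.sum_mul])
    have e3 : (∑ e ∈ E, ∑ f ∈ E, (if e = f then (1 : ℝ) else 0) * (q 2 - 2 * q 3 + q 4))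
        = (m : ℝ) * (q 2 - 2 * q 3 + q 4) := by
      rw [← hdiag, Finset.sum_mul]
      exact Finset.sum_congr rfl (fun e _ => by rw [Finset.sum_mul])
    rw [e1, e2, e3]
  -- numeric facts
  have hfactne : ((n.factorial : ℝ)) ≠ 0 := Nat.cast_ne_zero.mpr (Nat.factorial_ne_zero n)
  have hq2 : q 2 = (t : ℝ) * ((t : ℝ) - 1) * ((n - 2).factorial : ℕ) := by
    rw [hq]; push_cast [Nat.cast_mul]; rw [desc2]
  have hq3 : q 3 = (t : ℝ) * ((t : ℝ) - 1) * ((t : ℝ) - 2) * ((n - 3).factorial : ℕ) := by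
    rw [hq]; push_cast [Nat.cast_mul]; rw [desc3]
  have hq4 : q 4 = (t : ℝ) * ((t : ℝ) - 1) * ((t : ℝ) - 2) * ((t : ℝ) - 3)
      * ((n - 4).factorial : ℕ) := by
    rw [hq]; push_cast [Nat.cast_mul]; rw [desc4]
  have hfac : ∀ k : ℕ, k ≤ n →
      (n.factorial : ℝ) = (n.descFactorial k : ℕ) * ((n - k).factorial : ℕ) := by
    intro k hk
    rw [← Nat.factorial_mul_descFactorial hk]
    push_cast
    ring
  have hfac2 : (n.factorial : ℝ)
      = (n : ℝ) * ((n : ℝ) - 1) * ((n - 2).factorial : ℕ) := by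
    rw [hfac 2 (by omega), desc2]
  have hfac3 : (n.factorial : ℝ)
      = (n : ℝ) * ((n : ℝ) - 1) * ((n : ℝ) - 2) * ((n - 3).factorial : ℕ) := by
    rw [hfac 3 (by omega), desc3]
  have hfac4 : (n.factorial : ℝ)
      = (n : ℝ) * ((n : ℝ) - 1) * ((n : ℝ) - 2) * ((n : ℝ) - 3)
        * ((n - 4).factorial : ℕ) := by
    rw [hfac 4 hn, desc4]
  have hn4 : (4 : ℝ) ≤ (n : ℝ) := by exact_mod_cast hn
  have hnne : (n : ℝ) ≠ 0 := by linarith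
  have hn1 : (n : ℝ) - 1 ≠ 0 := by linarith
  have hn2 : (n : ℝ) - 2 ≠ 0 := by linarith
  have hn3 : (n : ℝ) - 3 ≠ 0 := by linarith
  have hf2ne : (((n - 2).factorial : ℕ) : ℝ) ≠ 0 :=
    Nat.cast_ne_zero.mpr (Nat.factorial_ne_zero _)
  have hf3ne : (((n - 3).factorial : ℕ) : ℝ) ≠ 0 :=
    Nat.cast_ne_zero.mpr (Nat.factorial_ne_zero _)
  have hf4ne : (((n - 4).factorial : ℕ) : ℝ) ≠ 0 :=
    Nat.cast_ne_zero.mpr (Nat.factorial_ne_zero _)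
  have hExv : Ex (fun π => (R1 G t π : ℝ)) = (m * q 2) / (n.factorial : ℝ) := by
    rw [Ex, hS1]
  have hEx2 : Ex (fun π => (R1 G t π : ℝ) ^ 2)
      = ((m : ℝ) ^ 2 * q 4 + (∑ i : Fin n, (G.degree i : ℝ) ^ 2) * (q 3 - q 4)
        + m * (q 2 - 2 * q 3 + q 4)) / (n.factorial : ℝ) := by
    rw [Ex, hS2]
  have hN3 : (n : ℝ) * ((n : ℝ) - 1) * ((n : ℝ) - 2) ≠ 0 :=
    mul_ne_zero (mul_ne_zero hnne hn1) hn2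
  have hN4 : (n : ℝ) * ((n : ℝ) - 1) * ((n : ℝ) - 2) * ((n : ℝ) - 3) ≠ 0 :=
    mul_ne_zero hN3 hn3
  have hQ3 : (t : ℝ) * ((t : ℝ) - 1) * ((t : ℝ) - 2)
        / ((n : ℝ) * ((n : ℝ) - 1) * ((n : ℝ) - 2))
      = (t : ℝ) * ((t : ℝ) - 1) * ((t : ℝ) - 2) * (((n - 3).factorial : ℕ) : ℝ)
        / (n.factorial : ℝ) := by
    rw [div_eq_div_iff hN3 hfactne, hfac3]
    ring
  have hQ4 : (t : ℝ) * ((t : ℝ) - 1) * ((t : ℝ) - 2) * ((t : ℝ) - 3)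
        / ((n : ℝ) * ((n : ℝ) - 1) * ((n : ℝ) - 2) * ((n : ℝ) - 3))
      = (t : ℝ) * ((t : ℝ) - 1) * ((t : ℝ) - 2) * ((t : ℝ) - 3)
          * (((n - 4).factorial : ℕ) : ℝ) / (n.factorial : ℝ) := by
    rw [div_eq_div_iff hN4 hfactne, hfac4]
    ring
  have key : (m : ℝ) ^ 2 * q 4 + (∑ i : Fin n, (G.degree i : ℝ) ^ 2) * (q 3 - q 4)
      + m * (q 2 - 2 * q 3 + q 4)
      = m * q 2
        + ((t : ℝ) * ((t : ℝ) - 1) * ((t : ℝ) - 2) * (((n - 3).factorial : ℕ) : ℝ))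
          * ((∑ i : Fin n, (G.degree i : ℝ) ^ 2) - 2 * (m : ℝ))
        + ((t : ℝ) * ((t : ℝ) - 1) * ((t : ℝ) - 2) * ((t : ℝ) - 3)
            * (((n - 4).factorial : ℕ) : ℝ))
          * ((m : ℝ) ^ 2 - (∑ i : Fin n, (G.degree i : ℝ) ^ 2) + (m : ℝ)) := by
    rw [hq2, hq3, hq4]
    ring
  rw [var_eq]
  simp only [hEx2, hExv, hQ3, hQ4, key]
  ring
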